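/- Let Q be a Markov kernel from X to Y with Dobrushin coefficient δ(Q), and let μ, ν be probability measures on X. Define P_μ(A) = ∫ Q(A|x) μ(dx). Then ‖P_μ − P_ν‖_TV ≤ (1 − δ(Q))·‖μ − ν‖_TV. -/

import Mathlib

open MeasureTheory ProbabilityTheory
open scoped ENNReal

/-- Total variation distance: sup over measurable functions bounded by 1. -/
noncomputable def TV {X : Type*} [MeasurableSpace X] (μ ν : Measure X) : ℝ :=
  sSup {r : ℝ | ∃ g : X → ℝ, Measurable g ∧ (∀ x, |g x| ≤ 1) ∧
    r = |∫ x, g x ∂μ - ∫ x, g x ∂ν|}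

/-- Dobrushin coefficient of a kernel: infimum over pairs of points and finite
measurable partitions of the sum of minima. -/
noncomputable def dobrushin {X Y : Type*} [MeasurableSpace X] [MeasurableSpace Y]
    (Q : Kernel X Y) : ℝ :=
  sInf {r : ℝ | ∃ (x x' : X) (n : ℕ) (A : Fin n → Set Y),
    (∀ i, MeasurableSet (A i)) ∧ Pairwise (Function.onFun Disjoint A) ∧
    (⋃ i, A i) = Set.univ ∧
    r = ∑ i, min ((Q x (A i)).toReal) ((Q x' (A i)).toReal)}

section Helpers

variable {X Y : Type*} [MeasurableSpace X] [MeasurableSpace Y]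

lemma integrable_of_bound (μ : Measure X) [IsFiniteMeasure μ] (f : X → ℝ) (C : ℝ)
    (hf : Measurable f) (hb : ∀ x, |f x| ≤ C) : Integrable f μ := by
  refine (integrable_const C).mono' hf.aestronglyMeasurable ?_
  exact Filter.Eventually.of_forall fun x => (Real.norm_eq_abs _ ▸ hb x)

lemma abs_integral_le_one (μ : Measure X) [IsProbabilityMeasure μ] (g : X → ℝ)
    (hb : ∀ x, |g x| ≤ 1) : |∫ x, g x ∂μ| ≤ 1 := by
  have := norm_integral_le_of_norm_le_const (μ := μ) (f := g) (C := 1)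
    (Filter.Eventually.of_forall fun x => (Real.norm_eq_abs _ ▸ hb x))
  simpa using this

lemma tv_set_bddAbove (μ ν : Measure X) [IsProbabilityMeasure μ] [IsProbabilityMeasure ν] :
    BddAbove {r : ℝ | ∃ g : X → ℝ, Measurable g ∧ (∀ x, |g x| ≤ 1) ∧
      r = |∫ x, g x ∂μ - ∫ x, g x ∂ν|} := by
  refine ⟨2, ?_⟩
  rintro r ⟨g, hg, hb, rfl⟩
  calc |∫ x, g x ∂μ - ∫ x, g x ∂ν| ≤ |∫ x, g x ∂μ| + |∫ x, g x ∂ν| := abs_sub _ _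
  _ ≤ 1 + 1 := add_le_add (abs_integral_le_one μ g hb) (abs_integral_le_one ν g hb)
  _ = 2 := by norm_num

lemma tv_nonneg (μ ν : Measure X) [IsProbabilityMeasure μ] [IsProbabilityMeasure ν] :
    0 ≤ TV μ ν := by
  refine le_csSup (tv_set_bddAbove μ ν) ?_
  exact ⟨fun _ => 0, measurable_const, fun x => by norm_num, by simp⟩

lemma dobrushin_nonneg (Q : Kernel X Y) : 0 ≤ dobrushin Q := by
  refine Real.sInf_nonneg ?_
  rintro r ⟨x, x', n, A, _, _, _, rfl⟩
  exact Finset.sum_nonneg fun i _ => le_min ENNReal.toReal_nonneg ENNReal.toReal_nonneg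

lemma dobrushin_le (Q : Kernel X Y) [IsMarkovKernel Q] (x x' : X) (n : ℕ) (A : Fin n → Set Y)
    (hm : ∀ i, MeasurableSet (A i)) (hd : Pairwise (Function.onFun Disjoint A))
    (hu : (⋃ i, A i) = Set.univ) :
    dobrushin Q ≤ ∑ i, min ((Q x (A i)).toReal) ((Q x' (A i)).toReal) := by
  refine csInf_le ⟨0, ?_⟩ ⟨x, x', n, A, hm, hd, hu, rfl⟩
  rintro r ⟨y, y', m, B, _, _, _, rfl⟩
  exact Finset.sum_nonneg fun i _ => le_min ENNReal.toReal_nonneg ENNReal.toReal_nonneg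

lemma dobrushin_le_one (Q : Kernel X Y) [IsMarkovKernel Q] [Nonempty X] :
    dobrushin Q ≤ 1 := by
  obtain ⟨x⟩ := (inferInstance : Nonempty X)
  have h := dobrushin_le Q x x 1 (fun _ => Set.univ) (fun _ => MeasurableSet.univ)
    (Subsingleton.pairwise) (Set.iUnion_const _)
  simpa using h

lemma abs_sub_eq_add_sub_two_min (a b : ℝ) : |a - b| = a + b - 2 * min a b := by
  rcases le_total a b with h | h
  · rw [abs_of_nonpos (by linarith), min_eq_left h]; ring
  · rw [abs_of_nonneg (by linarith), min_eq_right h]; ring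

lemma sum_toReal_eq_one (m : Measure Y) [IsProbabilityMeasure m] {n : ℕ} (A : Fin n → Set Y)
    (hm : ∀ i, MeasurableSet (A i)) (hd : Pairwise (Function.onFun Disjoint A))
    (hu : (⋃ i, A i) = Set.univ) :
    ∑ i, (m (A i)).toReal = 1 := by
  have h1 : ∑' i, m (A i) = 1 := by
    rw [← measure_iUnion hd hm, hu, measure_univ]
  rw [tsum_fintype] at h1
  have h2 : (∑ i, m (A i)).toReal = ∑ i, (m (A i)).toReal :=
    ENNReal.toReal_sum fun i _ => measure_ne_top m (A i)
  rw [← h2, h1, ENNReal.toReal_one]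

lemma integral_eq_sum_par (m : Measure Y) [IsProbabilityMeasure m] {n : ℕ} (A : Fin n → Set Y)
    (hm : ∀ i, MeasurableSet (A i)) (hd : Pairwise (Function.onFun Disjoint A))
    (hu : (⋃ i, A i) = Set.univ) (g : Y → ℝ) (hg : Measurable g) (hb : ∀ y, |g y| ≤ 1) :
    ∫ y, g y ∂m = ∑ i, ∫ y in A i, g y ∂m := by
  have hint : Integrable g m := integrable_of_bound m g 1 hg hb
  have h := integral_iUnion hm hd (hint.integrableOn : IntegrableOn g (⋃ i, A i) m)
  rw [hu, Measure.restrict_univ, tsum_fintype] at h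
  exact h

lemma piece_est (m : Measure Y) [IsProbabilityMeasure m] (g : Y → ℝ) (hg : Measurable g)
    (hb : ∀ y, |g y| ≤ 1) (A : Set Y) (hA : MeasurableSet A) (c ε : ℝ) (hε : 0 ≤ ε)
    (hrange : ∀ y ∈ A, c ≤ g y ∧ g y < c + ε) :
    |∫ y in A, g y ∂m - c * (m A).toReal| ≤ ε * (m A).toReal := by
  have hint : Integrable g m := integrable_of_bound m g 1 hg hb
  have heq : ∫ y in A, (g y - c) ∂m = ∫ y in A, g y ∂m - c * (m A).toReal := by
    rw [integral_sub hint.integrableOn (integrableOn_const (measure_ne_top m A)),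
      setIntegral_const, smul_eq_mul, mul_comm, Measure.real]
  have hnorm := norm_setIntegral_le_of_norm_le_const (μ := m) (s := A)
    (f := fun y => g y - c) (C := ε) (measure_lt_top m A)
    (fun y hy => by
      obtain ⟨h1, h2⟩ := hrange y hy
      have h3 : |g y - c| ≤ ε := by rw [abs_of_nonneg (by linarith)]; linarith
      simpa [Real.norm_eq_abs] using h3)
  rw [heq] at hnorm
  exact (Real.norm_eq_abs _ ▸ hnorm)

lemma key_osc (Q : Kernel X Y) [IsMarkovKernel Q] (g : Y → ℝ) (hg : Measurable g)
    (hb : ∀ y, |g y| ≤ 1) (x x' : X) :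
    |∫ y, g y ∂Q x - ∫ y, g y ∂Q x'| ≤ 2 - 2 * dobrushin Q := by
  refine le_of_forall_pos_le_add fun ε hε => ?_
  set δ := ε / 2 with hδdef
  have hδ : 0 < δ := by positivity
  set n : ℕ := ⌈2 / δ⌉₊ + 1 with hn
  set c : ℕ → ℝ := fun i => -1 + i * δ with hc
  set A : Fin n → Set Y := fun i => g ⁻¹' Set.Ico (c i) (c i + δ) with hA
  have hm : ∀ i, MeasurableSet (A i) := fun i => hg measurableSet_Ico
  have hmono : ∀ p q : Fin n, (p : ℕ) < q → Disjoint (A p) (A q) := by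
    intro p q hpq
    have hle : c p + δ ≤ c q := by
      have : ((p : ℕ) : ℝ) + 1 ≤ ((q : ℕ) : ℝ) := by exact_mod_cast hpq
      simp only [hc]
      nlinarith [hδ.le]
    refine Disjoint.preimage g ?_
    rw [Set.Ico_disjoint_Ico]
    exact le_trans (min_le_left _ _) (le_trans hle (le_max_right _ _))
  have hd : Pairwise (Function.onFun Disjoint A) := by
    intro i j hij
    rcases lt_or_gt_of_ne (fun h => hij (Fin.ext h)) with h | h
    · exact hmono i j h
    · exact (hmono j i h).symm
  have hu : (⋃ i, A i) = Set.univ := by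
    ext y
    simp only [Set.mem_iUnion, Set.mem_univ, iff_true]
    have hby := abs_le.1 (hb y)
    have h0 : (0:ℝ) ≤ (g y + 1) / δ := div_nonneg (by linarith [hby.1]) hδ.le
    set k : ℕ := ⌊(g y + 1) / δ⌋₊ with hk
    have hk1 : (k : ℝ) ≤ (g y + 1) / δ := Nat.floor_le h0
    have hk2 : (g y + 1) / δ < (k : ℝ) + 1 := Nat.lt_floor_add_one _
    have hkn : k < n := by
      have h2 : (g y + 1) / δ ≤ 2 / δ := by
        gcongr; linarith [hby.2]
      have h3 : (k : ℝ) ≤ (⌈2 / δ⌉₊ : ℝ) := le_trans hk1 (le_trans h2 (Nat.le_ceil _))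
      have h4 : (k : ℝ) < (n : ℝ) := by
        rw [hn]; push_cast; linarith
      exact_mod_cast h4
    refine ⟨⟨k, hkn⟩, ?_⟩
    simp only [hA, Set.mem_preimage, Set.mem_Ico, hc]
    have e1 : (k : ℝ) * δ ≤ g y + 1 := by
      rw [← div_mul_cancel₀ (g y + 1) hδ.ne']
      exact mul_le_mul_of_nonneg_right hk1 hδ.le
    have e2 : g y + 1 < ((k : ℝ) + 1) * δ := by
      rw [← div_mul_cancel₀ (g y + 1) hδ.ne']
      exact mul_lt_mul_of_pos_right hk2 hδ
    constructor
    · push_cast; linarith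
    · push_cast; nlinarith
  -- abbreviations
  set a : Fin n → ℝ := fun i => (Q x (A i)).toReal with ha
  set b : Fin n → ℝ := fun i => (Q x' (A i)).toReal with hbdef
  have hsa : ∑ i, a i = 1 := sum_toReal_eq_one (Q x) A hm hd hu
  have hsb : ∑ i, b i = 1 := sum_toReal_eq_one (Q x') A hm hd hu
  have hrange : ∀ i : Fin n, ∀ y ∈ A i, c i ≤ g y ∧ g y < c i + δ := by
    intro i y hy
    simpa [hA, Set.mem_preimage, Set.mem_Ico] using hy
  have hterm : ∀ i : Fin n,
      |(∫ y in A i, g y ∂Q x) - (∫ y in A i, g y ∂Q x')|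
        ≤ δ * a i + δ * b i + |a i - b i| := by
    intro i
    have p1 := piece_est (Q x) g hg hb (A i) (hm i) (c i) δ hδ.le (hrange i)
    have p2 := piece_est (Q x') g hg hb (A i) (hm i) (c i) δ hδ.le (hrange i)
    have hcb : |c i| * |a i - b i| ≤ |a i - b i| := by
      rcases Set.eq_empty_or_nonempty (A i) with he | ⟨y, hy⟩
      · have : a i = b i := by simp [ha, hbdef, he]
        simp [this]
      · have h1 := (hrange i y hy).1
        have h2 := (abs_le.1 (hb y)).2
        have hcl : (-1 : ℝ) ≤ c i := by
          have : (0:ℝ) ≤ ((i : ℕ) : ℝ) * δ := mul_nonneg (Nat.cast_nonneg _) hδ.le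
          simp only [hc]; linarith
        have : |c i| ≤ 1 := abs_le.2 ⟨hcl, by linarith⟩
        exact mul_le_of_le_one_left (abs_nonneg _) this
    calc |(∫ y in A i, g y ∂Q x) - (∫ y in A i, g y ∂Q x')|
        ≤ |(∫ y in A i, g y ∂Q x) - c i * a i| + |c i * a i - c i * b i|
            + |c i * b i - (∫ y in A i, g y ∂Q x')| := by
          have t1 := abs_sub_le (∫ y in A i, g y ∂Q x) (c i * a i) (∫ y in A i, g y ∂Q x')
          have t2 := abs_sub_le (c i * a i) (c i * b i) (∫ y in A i, g y ∂Q x')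
          linarith
      _ ≤ δ * a i + |c i| * |a i - b i| + δ * b i := by
          refine add_le_add (add_le_add p1 ?_) ?_
          · rw [← mul_sub, abs_mul]
          · rw [abs_sub_comm]; exact p2
      _ ≤ δ * a i + δ * b i + |a i - b i| := by linarith [hcb]
  have hsplit1 := integral_eq_sum_par (Q x) A hm hd hu g hg hb
  have hsplit2 := integral_eq_sum_par (Q x') A hm hd hu g hg hb
  have hdob := dobrushin_le Q x x' n A hm hd hu
  have hminsum : ∑ i, |a i - b i| = 2 - 2 * ∑ i, min (a i) (b i) := by
    rw [Finset.sum_congr rfl fun i _ => abs_sub_eq_add_sub_two_min (a i) (b i)]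
    rw [Finset.sum_sub_distrib, Finset.sum_add_distrib, hsa, hsb, ← Finset.mul_sum]
    ring
  calc |∫ y, g y ∂Q x - ∫ y, g y ∂Q x'|
      = |∑ i, ((∫ y in A i, g y ∂Q x) - (∫ y in A i, g y ∂Q x'))| := by
        rw [hsplit1, hsplit2, Finset.sum_sub_distrib]
    _ ≤ ∑ i, |(∫ y in A i, g y ∂Q x) - (∫ y in A i, g y ∂Q x')| :=
        Finset.abs_sum_le_sum_abs _ _
    _ ≤ ∑ i, (δ * a i + δ * b i + |a i - b i|) := Finset.sum_le_sum fun i _ => hterm i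
    _ = δ * 1 + δ * 1 + (2 - 2 * ∑ i, min (a i) (b i)) := by
        rw [Finset.sum_add_distrib, Finset.sum_add_distrib, ← Finset.mul_sum, ← Finset.mul_sum,
          hsa, hsb, hminsum]
    _ ≤ 2 - 2 * dobrushin Q + ε := by
        have : dobrushin Q ≤ ∑ i, min (a i) (b i) := hdob
        rw [hδdef]; linarith

lemma bind_isProb (μ : Measure X) [IsProbabilityMeasure μ] (Q : Kernel X Y) [IsMarkovKernel Q] :
    IsProbabilityMeasure (μ.bind fun x => Q x) := by
  constructor
  rw [Measure.bind_apply MeasurableSet.univ (Kernel.measurable Q).aemeasurable]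
  simp

lemma integral_bind' (μ : Measure X) [IsProbabilityMeasure μ] (Q : Kernel X Y) [IsMarkovKernel Q]
    (g : Y → ℝ) (hg : Measurable g) (hb : ∀ y, |g y| ≤ 1) :
    ∫ y, g y ∂(μ.bind fun x => Q x) = ∫ x, ∫ y, g y ∂(Q x) ∂μ := by
  haveI := bind_isProb μ Q
  set F : X → ℝ≥0∞ := fun x => ∫⁻ y, ENNReal.ofReal (g y) ∂Q x with hF
  set G : X → ℝ≥0∞ := fun x => ∫⁻ y, ENNReal.ofReal (-g y) ∂Q x with hG
  have hgm : Measurable fun y => ENNReal.ofReal (g y) := hg.ennreal_ofReal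
  have hgm' : Measurable fun y => ENNReal.ofReal (-g y) := hg.neg.ennreal_ofReal
  have hFm : Measurable F := Measurable.lintegral_kernel_prod_right
    (f := fun _ y => ENNReal.ofReal (g y)) (hgm.comp measurable_snd)
  have hGm : Measurable G := Measurable.lintegral_kernel_prod_right
    (f := fun _ y => ENNReal.ofReal (-g y)) (hgm'.comp measurable_snd)
  have hFle : ∀ x, F x ≤ 1 := by
    intro x
    calc F x ≤ ∫⁻ _, 1 ∂Q x := lintegral_mono fun y =>
          ENNReal.ofReal_le_one.2 (abs_le.1 (hb y)).2
    _ = 1 := by simp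
  have hGle : ∀ x, G x ≤ 1 := by
    intro x
    calc G x ≤ ∫⁻ _, 1 ∂Q x := lintegral_mono fun y =>
          ENNReal.ofReal_le_one.2 (by linarith [(abs_le.1 (hb y)).1])
    _ = 1 := by simp
  have hper : ∀ x, ∫ y, g y ∂Q x = (F x).toReal - (G x).toReal := fun x =>
    integral_eq_lintegral_pos_part_sub_lintegral_neg_part
      (integrable_of_bound (Q x) g 1 hg hb)
  have hbindint : ∫ y, g y ∂(μ.bind fun x => Q x)
      = (∫⁻ y, ENNReal.ofReal (g y) ∂(μ.bind fun x => Q x)).toReal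
        - (∫⁻ y, ENNReal.ofReal (-g y) ∂(μ.bind fun x => Q x)).toReal :=
    integral_eq_lintegral_pos_part_sub_lintegral_neg_part
      (integrable_of_bound _ g 1 hg hb)
  rw [hbindint, Measure.lintegral_bind (Kernel.measurable Q).aemeasurable hgm.aemeasurable,
    Measure.lintegral_bind (Kernel.measurable Q).aemeasurable hgm'.aemeasurable]
  have hFi : ∫ x, (F x).toReal ∂μ = (∫⁻ x, F x ∂μ).toReal :=
    integral_toReal hFm.aemeasurable (Filter.Eventually.of_forall fun x =>
      lt_of_le_of_lt (hFle x) ENNReal.one_lt_top)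
  have hGi : ∫ x, (G x).toReal ∂μ = (∫⁻ x, G x ∂μ).toReal :=
    integral_toReal hGm.aemeasurable (Filter.Eventually.of_forall fun x =>
      lt_of_le_of_lt (hGle x) ENNReal.one_lt_top)
  rw [← hFi, ← hGi, ← integral_sub]
  · exact (integral_congr_ae (Filter.Eventually.of_forall fun x => (hper x).symm))
  · refine integrable_of_bound μ _ 1 hFm.ennreal_toReal fun x => ?_
    rw [abs_of_nonneg ENNReal.toReal_nonneg]
    exact ENNReal.toReal_le_of_le_ofReal zero_le_one (by simpa using hFle x)
  · refine integrable_of_bound μ _ 1 hGm.ennreal_toReal fun x => ?_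
    rw [abs_of_nonneg ENNReal.toReal_nonneg]
    exact ENNReal.toReal_le_of_le_ofReal zero_le_one (by simpa using hGle x)

lemma tv_bound (μ ν : Measure X) [IsProbabilityMeasure μ] [IsProbabilityMeasure ν]
    (f : X → ℝ) (hf : Measurable f) (c M : ℝ) (hM : 0 ≤ M) (hc : ∀ x, |f x - c| ≤ M) :
    |∫ x, f x ∂μ - ∫ x, f x ∂ν| ≤ M * TV μ ν := by
  have hfb : ∀ x, |f x| ≤ M + |c| := by
    intro x
    calc |f x| = |(f x - c) + c| := by ring_nf
    _ ≤ |f x - c| + |c| := abs_add_le _ _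
    _ ≤ M + |c| := by linarith [hc x]
  have hfint : ∀ (m : Measure X) [IsProbabilityMeasure m], Integrable f m := fun m _ =>
    integrable_of_bound m f (M + |c|) hf hfb
  rcases eq_or_lt_of_le hM with hM0 | hMpos
  · have hfc : f = fun _ => c := by
      funext x
      have := hc x
      rw [← hM0] at this
      have := abs_nonpos_iff.1 this
      linarith [sub_eq_zero.1 this]
    rw [hfc]
    simp [integral_const, ← hM0]
  · set g : X → ℝ := fun x => (f x - c) / M with hgdef
    have hgm : Measurable g := (hf.sub measurable_const).div_const M
    have hgb : ∀ x, |g x| ≤ 1 := by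
      intro x
      rw [hgdef]
      rw [abs_div, abs_of_pos hMpos, div_le_one hMpos]
      exact hc x
    have hgint : ∀ (m : Measure X) [IsProbabilityMeasure m],
        ∫ x, g x ∂m = (∫ x, f x ∂m - c) / M := by
      intro m _
      rw [hgdef]
      rw [integral_div, integral_sub (hfint m) (integrable_const c), integral_const]
      simp
    have hmem : |∫ x, g x ∂μ - ∫ x, g x ∂ν| ∈ {r : ℝ | ∃ g : X → ℝ, Measurable g ∧
        (∀ x, |g x| ≤ 1) ∧ r = |∫ x, g x ∂μ - ∫ x, g x ∂ν|} := ⟨g, hgm, hgb, rfl⟩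
    have hle : |∫ x, g x ∂μ - ∫ x, g x ∂ν| ≤ TV μ ν := le_csSup (tv_set_bddAbove μ ν) hmem
    have heq : |∫ x, f x ∂μ - ∫ x, f x ∂ν| = M * |∫ x, g x ∂μ - ∫ x, g x ∂ν| := by
      rw [hgint μ, hgint ν, div_sub_div_same, abs_div, abs_of_pos hMpos]
      field_simp
      congr 1; ring
    rw [heq]
    exact mul_le_mul_of_nonneg_left hle hM

end Helpers

theorem stmt6 {X Y : Type*} [MeasurableSpace X] [MeasurableSpace Y]
    (Q : Kernel X Y) [IsMarkovKernel Q]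
    (μ ν : Measure X) [IsProbabilityMeasure μ] [IsProbabilityMeasure ν] :
    TV (μ.bind (fun x => Q x)) (ν.bind (fun x => Q x)) ≤ (1 - dobrushin Q) * TV μ ν := by
  haveI hXne : Nonempty X := by
    rcases isEmpty_or_nonempty X with h | h
    · exfalso
      have h1 : μ Set.univ = 1 := measure_univ
      rw [Set.univ_eq_empty_iff.2 h, measure_empty] at h1
      exact zero_ne_one h1
    · exact h
  have hδ0 : 0 ≤ dobrushin Q := dobrushin_nonneg Q
  have hδ1 : dobrushin Q ≤ 1 := dobrushin_le_one Q
  have hM : 0 ≤ 1 - dobrushin Q := by linarith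
  have hprod : 0 ≤ (1 - dobrushin Q) * TV μ ν := mul_nonneg hM (tv_nonneg μ ν)
  refine Real.sSup_le ?_ hprod
  rintro r ⟨g, hg, hb, rfl⟩
  set f : X → ℝ := fun x => ∫ y, g y ∂Q x with hfdef
  have hfm : Measurable f := (StronglyMeasurable.integral_kernel_prod_right'
      (κ := Q) (f := fun p : X × Y => g p.2)
      ((hg.comp measurable_snd).stronglyMeasurable)).measurable
  have hfb : ∀ x, |f x| ≤ 1 := fun x => abs_integral_le_one (Q x) g hb
  rw [integral_bind' μ Q g hg hb, integral_bind' ν Q g hg hb]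
  have hrne : (Set.range f).Nonempty := Set.range_nonempty f
  have hbdd : BddAbove (Set.range f) := by
    refine ⟨1, ?_⟩
    rintro _ ⟨x, rfl⟩
    exact (abs_le.1 (hfb x)).2
  set S := sSup (Set.range f) with hS
  have hub : ∀ x, f x ≤ S := fun x => le_csSup hbdd ⟨x, rfl⟩
  have hlb : ∀ x, S ≤ f x + (2 - 2 * dobrushin Q) := by
    intro x
    refine csSup_le hrne ?_
    rintro _ ⟨x', rfl⟩
    have hosc := key_osc Q g hg hb x' x
    have := (abs_le.1 hosc).2
    linarith
  have hcenter : ∀ x, |f x - (S - (1 - dobrushin Q))| ≤ 1 - dobrushin Q := by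
    intro x
    rw [abs_le]
    constructor
    · linarith [hlb x]
    · linarith [hub x]
  exact tv_bound μ ν f hfm (S - (1 - dobrushin Q)) (1 - dobrushin Q) hM hcenter
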